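/- Let S ⊆ M_d be a Hermitian subspace containing a positive definite matrix P, and let T : S → M_{d'} be a completely positive linear map. Then there exists a completely positive linear map T̃ : M_d → M_{d'} with T̃(X) = T(X) for all X ∈ S. -/

import Mathlib

open scoped Kronecker ComplexOrder Matrix.Norms.L2Operator
open Matrix Filter Classical

/-- `M_d`, the algebra of `d × d` complex matrices. -/
abbrev Mat (d : ℕ) := Matrix (Fin d) (Fin d) ℂ

/-- A linear map `T : S → M_{d'}` on a subspace `S ⊆ M_d` is completely positive if for
every `n` and every positive semidefinite `P = Σ_j X_j ⊗ K_j` with `X_j ∈ S`, `K_j ∈ M_n`,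
the matrix `(T ⊗ id_n)(P) = Σ_j T(X_j) ⊗ K_j` is positive semidefinite. -/
def IsCPOn {d d' : ℕ} (S : Submodule ℂ (Mat d)) (T : S →ₗ[ℂ] Mat d') : Prop :=
  ∀ (n m : ℕ) (X : Fin m → S) (K : Fin m → Matrix (Fin n) (Fin n) ℂ),
    (∑ j, (X j : Mat d) ⊗ₖ K j).PosSemidef →
    (∑ j, (T (X j)) ⊗ₖ K j).PosSemidef

/-- Complete positivity for a linear map defined on all of `M_d`. -/
def IsCP {d d' : ℕ} (T : Mat d →ₗ[ℂ] Mat d') : Prop :=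
  ∀ (n m : ℕ) (X : Fin m → Mat d) (K : Fin m → Matrix (Fin n) (Fin n) ℂ),
    (∑ j, X j ⊗ₖ K j).PosSemidef →
    (∑ j, T (X j) ⊗ₖ K j).PosSemidef

namespace ArvAux

/-! ### General positive semidefiniteness helpers -/

lemma posSemidef_csmul {m : Type*} [Fintype m] {M : Matrix m m ℂ} (hM : M.PosSemidef)
    {r : ℝ} (hr : 0 ≤ r) : ((r : ℂ) • M).PosSemidef := by
  refine PosSemidef.of_dotProduct_mulVec_nonneg ?_ ?_
  · unfold Matrix.IsHermitian
    rw [conjTranspose_smul, hM.1]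
    norm_num
  · intro x
    rw [smul_mulVec, dotProduct_smul, smul_eq_mul]
    exact mul_nonneg (by exact_mod_cast hr) (hM.dotProduct_mulVec_nonneg x)

variable {m n' : Type*} [Fintype m] [DecidableEq m] [Fintype n'] [DecidableEq n']

lemma conj_unitary_psd {A : Matrix m m ℂ} (hA : A.IsHermitian) (c : ℝ)
    (hc : ∀ i, 0 ≤ c + hA.eigenvalues i) : ((c : ℂ) • 1 + A).PosSemidef := by
  set U : Matrix m m ℂ := (hA.eigenvectorUnitary : Matrix m m ℂ) with hUdef
  have hU : U * star U = 1 := (Matrix.mem_unitaryGroup_iff).mp hA.eigenvectorUnitary.2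
  have h1 : (c : ℂ) • (1 : Matrix m m ℂ) = U * ((c : ℂ) • 1) * star U := by
    rw [Matrix.mul_smul, Matrix.smul_mul, mul_one, hU]
  have key : (c : ℂ) • 1 + A =
      U * (diagonal fun i => ((c + hA.eigenvalues i : ℝ) : ℂ)) * Uᴴ := by
    conv_lhs => rw [hA.spectral_theorem, h1]
    rw [Unitary.conjStarAlgAut_apply, ← hUdef]
    rw [← Matrix.star_eq_conjTranspose, ← Matrix.add_mul, ← Matrix.mul_add]
    congr 2
    rw [← Matrix.diagonal_one, ← Matrix.diagonal_smul, Matrix.diagonal_add]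
    congr 1
    funext i
    simp [add_comm]
  rw [key]
  exact (Matrix.PosSemidef.diagonal (fun i => by
    simpa using Complex.zero_le_real.mpr (hc i))).mul_mul_conjTranspose_same _

lemma exists_shift {A : Matrix m m ℂ} (hA : A.IsHermitian) :
    ∃ t : ℝ, 0 ≤ t ∧ ((t : ℂ) • 1 + A).PosSemidef := by
  refine ⟨∑ i, |hA.eigenvalues i|, Finset.sum_nonneg fun i _ => abs_nonneg _, ?_⟩
  refine conj_unitary_psd hA _ fun i => ?_
  have h1 : |hA.eigenvalues i| ≤ ∑ j, |hA.eigenvalues j| :=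
    Finset.single_le_sum (f := fun j => |hA.eigenvalues j|) (fun j _ => abs_nonneg _)
      (Finset.mem_univ i)
  have := neg_abs_le (hA.eigenvalues i)
  linarith

lemma posdef_sub {A : Matrix m m ℂ} (hA : A.PosDef) :
    ∃ ε : ℝ, 0 < ε ∧ (A - (ε : ℂ) • 1).PosSemidef := by
  rcases isEmpty_or_nonempty m with hm | hm
  · refine ⟨1, one_pos, ?_⟩
    refine PosSemidef.of_dotProduct_mulVec_nonneg ?_ ?_
    · ext i j; exact hm.elim i
    · intro x; simp [dotProduct]
  · refine ⟨Finset.univ.inf' Finset.univ_nonempty hA.1.eigenvalues, ?_, ?_⟩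
    · rw [Finset.lt_inf'_iff]
      exact fun i _ => hA.eigenvalues_pos i
    · have h2 := conj_unitary_psd hA.1 (-(Finset.univ.inf' Finset.univ_nonempty hA.1.eigenvalues))
        (fun i => by
          have : Finset.univ.inf' Finset.univ_nonempty hA.1.eigenvalues ≤ hA.1.eigenvalues i :=
            Finset.inf'_le _ (Finset.mem_univ i)
          linarith)
      convert h2 using 1
      push_cast
      rw [sub_eq_add_neg, add_comm, neg_smul]

lemma kronecker_one_psd {A : Matrix m m ℂ} (hA : A.PosSemidef) :
    (A ⊗ₖ (1 : Matrix n' n' ℂ)).PosSemidef := by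
  refine PosSemidef.of_dotProduct_mulVec_nonneg ?_ ?_
  · ext ⟨i, k⟩ ⟨j, l⟩
    have h2 := congrFun (congrFun hA.1 i) j
    simp only [conjTranspose_apply, kroneckerMap_apply, one_apply, star_mul'] at h2 ⊢
    rw [h2]
    by_cases h : l = k
    · simp [h]
    · rw [if_neg h, if_neg (fun h' => h h'.symm)]
      simp
  · intro x
    have hmv : ∀ p : m × n', ((A ⊗ₖ (1 : Matrix n' n' ℂ)) *ᵥ x) p = ∑ j, A p.1 j * x (j, p.2) := by
      rintro ⟨i, k⟩
      simp only [mulVec, dotProduct, Fintype.sum_prod_type, kroneckerMap_apply, one_apply]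
      congr 1; funext j
      rw [Finset.sum_eq_single k] <;> simp +contextual [eq_comm]
    have : dotProduct (star x) ((A ⊗ₖ (1 : Matrix n' n' ℂ)) *ᵥ x)
        = ∑ k : n', dotProduct (star fun i => x (i, k)) (A *ᵥ fun i => x (i, k)) := by
      simp only [dotProduct, Pi.star_apply, hmv]
      simp only [mulVec, dotProduct]
      simp only [Fintype.sum_prod_type]
      rw [Finset.sum_comm]
    rw [this]
    exact Finset.sum_nonneg fun k _ => hA.dotProduct_mulVec_nonneg _

lemma psd_of_kronecker_one {A : Matrix m m ℂ}
    (h : (A ⊗ₖ (1 : Matrix (Fin 1) (Fin 1) ℂ)).PosSemidef) : A.PosSemidef := by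
  have e : A = (A ⊗ₖ (1 : Matrix (Fin 1) (Fin 1) ℂ)).submatrix (fun i => (i, 0))
      (fun i => (i, 0)) := by
    ext i j; simp
  rw [e]
  exact h.submatrix _

/-! ### Blocks and the domain subspace -/

variable {d d' : ℕ}

abbrev BigMat (d d' : ℕ) := Matrix (Fin d × Fin d') (Fin d × Fin d') ℂ

/-- the (k,l) block of a big matrix -/
def blk (M : BigMat d d') (k l : Fin d') : Mat d := Matrix.of fun i j => M (i, k) (j, l)

@[simp] lemma blk_apply (M : BigMat d d') (k l : Fin d') (i j : Fin d) :
    blk M k l i j = M (i, k) (j, l) := rfl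

@[simp] lemma blk_add (M M' : BigMat d d') (k l : Fin d') :
    blk (M + M') k l = blk M k l + blk M' k l := by ext i j; simp

@[simp] lemma blk_smul (c : ℂ) (M : BigMat d d') (k l : Fin d') :
    blk (c • M) k l = c • blk M k l := by ext i j; simp

@[simp] lemma blk_zero (k l : Fin d') : blk (0 : BigMat d d') k l = 0 := by ext i j; simp

lemma blk_conjTranspose (M : BigMat d d') (k l : Fin d') :
    blk Mᴴ k l = (blk M l k)ᴴ := by ext i j; simp

lemma blk_kronecker (X : Mat d) (K : Matrix (Fin d') (Fin d') ℂ) (k l : Fin d') :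
    blk (X ⊗ₖ K) k l = K k l • X := by ext i j; simp [mul_comm]

lemma blk_sum {ι : Type*} (s : Finset ι) (F : ι → BigMat d d') (k l : Fin d') :
    blk (∑ j ∈ s, F j) k l = ∑ j ∈ s, blk (F j) k l := by
  ext i j; simp [Matrix.sum_apply]

lemma blk_decomp (M : BigMat d d') :
    M = ∑ k : Fin d', ∑ l : Fin d', (blk M k l) ⊗ₖ Matrix.single k l (1 : ℂ) := by
  ext ⟨i, a⟩ ⟨j, b⟩
  simp only [Matrix.sum_apply, kroneckerMap_apply, blk_apply, Matrix.single, of_apply]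
  rw [Finset.sum_eq_single a]
  · rw [Finset.sum_eq_single b] <;> simp +contextual
  · intro k _ hk
    apply Finset.sum_eq_zero
    intro l _
    simp [hk]
  · simp

/-- the domain subspace: big matrices all of whose blocks lie in `S` -/
noncomputable def pdom (S : Submodule ℂ (Mat d)) (d' : ℕ) : Submodule ℂ (BigMat d d') where
  carrier := {M | ∀ k l, blk M k l ∈ S}
  add_mem' h1 h2 k l := by rw [blk_add]; exact S.add_mem (h1 k l) (h2 k l)
  zero_mem' k l := by rw [blk_zero]; exact S.zero_mem
  smul_mem' c M h k l := by rw [blk_smul]; exact S.smul_mem c (h k l)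

lemma mem_pdom {S : Submodule ℂ (Mat d)} {M : BigMat d d'} :
    M ∈ pdom S d' ↔ ∀ k l, blk M k l ∈ S := Iff.rfl

lemma pdom_conj {S : Submodule ℂ (Mat d)} (hherm : ∀ X ∈ S, Xᴴ ∈ S) {M : BigMat d d'}
    (h : M ∈ pdom S d') : Mᴴ ∈ pdom S d' := by
  intro k l
  rw [blk_conjTranspose]
  exact hherm _ (h l k)

/-- the partial functional -/
noncomputable def fC (S : Submodule ℂ (Mat d)) (T : S →ₗ[ℂ] Mat d') :
    ↥(pdom S d') →ₗ[ℂ] ℂ where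
  toFun M := ∑ k, ∑ l, (T ⟨blk (M : BigMat d d') k l, M.2 k l⟩) k l
  map_add' M M' := by
    have key : ∀ k l, (T ⟨blk ((M + M' : ↥(pdom S d')) : BigMat d d') k l, (M + M').2 k l⟩) k l
        = (T ⟨blk (M : BigMat d d') k l, M.2 k l⟩) k l
          + (T ⟨blk (M' : BigMat d d') k l, M'.2 k l⟩) k l := by
      intro k l
      have h2 : (⟨blk ((M + M' : ↥(pdom S d')) : BigMat d d') k l, (M + M').2 k l⟩ : S)
          = ⟨blk (M : BigMat d d') k l, M.2 k l⟩ + ⟨blk (M' : BigMat d d') k l, M'.2 k l⟩ := by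
        apply Subtype.ext; simp
      rw [h2, map_add, Matrix.add_apply]
    simp only [key, Finset.sum_add_distrib]
  map_smul' c M := by
    have key : ∀ k l, (T ⟨blk ((c • M : ↥(pdom S d')) : BigMat d d') k l, (c • M).2 k l⟩) k l
        = c * (T ⟨blk (M : BigMat d d') k l, M.2 k l⟩) k l := by
      intro k l
      have h2 : (⟨blk ((c • M : ↥(pdom S d')) : BigMat d d') k l, (c • M).2 k l⟩ : S)
          = c • ⟨blk (M : BigMat d d') k l, M.2 k l⟩ := by
        apply Subtype.ext; simp
      rw [h2, LinearMap.map_smul, Matrix.smul_apply, smul_eq_mul]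
    simp only [key, RingHom.id_apply, smul_eq_mul, Finset.mul_sum]

variable {S : Submodule ℂ (Mat d)} {T : S →ₗ[ℂ] Mat d'}

lemma fC_apply (M : ↥(pdom S d')) :
    fC S T M = ∑ k, ∑ l, (T ⟨blk (M : BigMat d d') k l, M.2 k l⟩) k l := rfl

/-- T maps psd to psd -/
lemma T_psd (hT : IsCPOn S T) (x : S) (hx : (x : Mat d).PosSemidef) : (T x).PosSemidef := by
  have h1 : (∑ _j : Fin 1, (x : Mat d) ⊗ₖ (1 : Matrix (Fin 1) (Fin 1) ℂ)).PosSemidef := by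
    rw [Fin.sum_univ_one]
    exact kronecker_one_psd hx
  have h2 := hT 1 1 (fun _ => x) (fun _ => 1) h1
  rw [Fin.sum_univ_one] at h2
  exact psd_of_kronecker_one h2

/-- T preserves hermitian elements -/
lemma T_herm (hT : IsCPOn S T) {P : Mat d} (hP : P.PosDef) (hPS : P ∈ S)
    (x : S) (hx : (x : Mat d)ᴴ = (x : Mat d)) : (T x)ᴴ = T x := by
  obtain ⟨t, ht, hshift⟩ := exists_shift (A := (x : Mat d)) hx
  obtain ⟨ε, hε, hPε⟩ := posdef_sub hP
  set c : ℝ := t / ε with hc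
  have hc0 : 0 ≤ c := div_nonneg ht hε.le
  have hcε : (c : ℂ) * (ε : ℂ) = (t : ℂ) := by
    have hεne : (ε : ℝ) ≠ 0 := hε.ne'
    rw [hc]
    push_cast
    field_simp
  have hsum : ((x : Mat d) + (c : ℂ) • P).PosSemidef := by
    have heq : (x : Mat d) + (c : ℂ) • P
        = ((t : ℂ) • 1 + (x : Mat d)) + (c : ℂ) • (P - (ε : ℂ) • 1) := by
      rw [smul_sub, smul_smul, hcε]
      abel
    rw [heq]
    exact hshift.add (posSemidef_csmul hPε hc0)
  have hmem : (x : Mat d) + (c : ℂ) • P ∈ S := S.add_mem x.2 (S.smul_mem _ hPS)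
  have h1 : (T ⟨(x : Mat d) + (c : ℂ) • P, hmem⟩).PosSemidef := T_psd hT _ hsum
  have h2 : (T ⟨P, hPS⟩).PosSemidef := T_psd hT _ hP.posSemidef
  have h3 : (⟨(x : Mat d) + (c : ℂ) • P, hmem⟩ : S) = x + (c : ℂ) • ⟨P, hPS⟩ := by
    apply Subtype.ext; simp
  rw [h3, map_add, LinearMap.map_smul] at h1
  have h4 : (T x + (c : ℂ) • T ⟨P, hPS⟩)ᴴ = T x + (c : ℂ) • T ⟨P, hPS⟩ := h1.1
  have h5 : (T ⟨P, hPS⟩)ᴴ = T ⟨P, hPS⟩ := h2.1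
  have hstar : star (c : ℂ) = (c : ℂ) := by simp
  rw [conjTranspose_add, conjTranspose_smul, h5, hstar] at h4
  exact add_right_cancel h4

/-- T intertwines conjTranspose -/
lemma T_conj (hherm : ∀ X ∈ S, Xᴴ ∈ S) (hT : IsCPOn S T) {P : Mat d} (hP : P.PosDef)
    (hPS : P ∈ S) (x : S) : (T x)ᴴ = T ⟨(x : Mat d)ᴴ, hherm _ x.2⟩ := by
  have hstar2 : star (2 : ℂ) = 2 := by norm_num
  set xs : S := ⟨(x : Mat d)ᴴ, hherm _ x.2⟩ with hxs
  have hh' : ((x + xs : S) : Mat d)ᴴ = ((x + xs : S) : Mat d) := by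
    show ((x : Mat d) + (x : Mat d)ᴴ)ᴴ = (x : Mat d) + (x : Mat d)ᴴ
    rw [conjTranspose_add, conjTranspose_conjTranspose, add_comm]
  have hk' : ((Complex.I • (x - xs) : S) : Mat d)ᴴ = ((Complex.I • (x - xs) : S) : Mat d) := by
    show (Complex.I • ((x : Mat d) - (x : Mat d)ᴴ))ᴴ = Complex.I • ((x : Mat d) - (x : Mat d)ᴴ)
    rw [conjTranspose_smul, conjTranspose_sub, conjTranspose_conjTranspose, Complex.star_def,
      Complex.conj_I]
    module
  have hTh := T_herm hT hP hPS (x + xs) hh'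
  have hTk := T_herm hT hP hPS (Complex.I • (x - xs)) hk'
  have h2x : (2 : ℂ) • x = (x + xs) - Complex.I • (Complex.I • (x - xs)) := by
    apply Subtype.ext
    show (2 : ℂ) • (x : Mat d)
        = ((x : Mat d) + (x : Mat d)ᴴ) - Complex.I • (Complex.I • ((x : Mat d) - (x : Mat d)ᴴ))
    rw [smul_smul, Complex.I_mul_I]
    module
  have h2xs : (2 : ℂ) • xs = (x + xs) + Complex.I • (Complex.I • (x - xs)) := by
    apply Subtype.ext
    show (2 : ℂ) • (x : Mat d)ᴴ
        = ((x : Mat d) + (x : Mat d)ᴴ) + Complex.I • (Complex.I • ((x : Mat d) - (x : Mat d)ᴴ))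
    rw [smul_smul, Complex.I_mul_I]
    module
  have key : (2 : ℂ) • (T x)ᴴ = (2 : ℂ) • T xs := by
    calc (2 : ℂ) • (T x)ᴴ = (T ((2 : ℂ) • x))ᴴ := by
          rw [LinearMap.map_smul, conjTranspose_smul, hstar2]
      _ = (T (x + xs) - Complex.I • T (Complex.I • (x - xs)))ᴴ := by
          rw [h2x, map_sub, LinearMap.map_smul]
      _ = T (x + xs) + Complex.I • T (Complex.I • (x - xs)) := by
          rw [conjTranspose_sub, conjTranspose_smul, hTh, hTk, Complex.star_def, Complex.conj_I]
          module
      _ = T ((2 : ℂ) • xs) := by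
          have hms : T (Complex.I • (Complex.I • (x - xs)))
              = Complex.I • T (Complex.I • (x - xs)) := LinearMap.map_smul T _ _
          conv_rhs => rw [h2xs, map_add, hms]
      _ = (2 : ℂ) • T xs := by rw [LinearMap.map_smul]
  exact smul_right_injective _ two_ne_zero key

lemma fC_conj (hherm : ∀ X ∈ S, Xᴴ ∈ S) (hT : IsCPOn S T) {P : Mat d} (hP : P.PosDef)
    (hPS : P ∈ S) {M : BigMat d d'} (h : M ∈ pdom S d') :
    fC S T ⟨Mᴴ, pdom_conj hherm h⟩ = starRingEnd ℂ (fC S T ⟨M, h⟩) := by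
  rw [fC_apply, fC_apply, map_sum, Finset.sum_comm]
  refine Finset.sum_congr rfl fun a _ => ?_
  rw [map_sum]
  refine Finset.sum_congr rfl fun b _ => ?_
  have h1 : (⟨blk (Mᴴ) b a, (pdom_conj hherm h : Mᴴ ∈ pdom S d') b a⟩ : S)
      = ⟨(blk M a b)ᴴ, hherm _ (h a b)⟩ :=
    Subtype.ext (blk_conjTranspose M b a)
  rw [h1, ← T_conj hherm hT hP hPS ⟨blk M a b, h a b⟩]
  simp [conjTranspose_apply]

lemma fC_nonneg (hT : IsCPOn S T) {M : BigMat d d'} (hmem : M ∈ pdom S d')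
    (hM : M.PosSemidef) : 0 ≤ fC S T ⟨M, hmem⟩ := by
  classical
  have collapse : ∀ {β : Type} [AddCommMonoid β] (G : Fin d' × Fin d' → β),
      ∑ j : Fin (d' * d'), G (finProdFinEquiv.symm j) = ∑ k, ∑ l, G (k, l) := by
    intro β _ G
    rw [Equiv.sum_comp finProdFinEquiv.symm G, ← Fintype.sum_prod_type]
  have key := hT d' (d' * d')
      (fun j => ⟨blk M (finProdFinEquiv.symm j).1 (finProdFinEquiv.symm j).2, hmem _ _⟩)
      (fun j => Matrix.single (finProdFinEquiv.symm j).1 (finProdFinEquiv.symm j).2 1)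
      (by
        show (∑ j : Fin (d' * d'), blk M (finProdFinEquiv.symm j).1 (finProdFinEquiv.symm j).2
            ⊗ₖ Matrix.single (finProdFinEquiv.symm j).1 (finProdFinEquiv.symm j).2
              (1 : ℂ)).PosSemidef
        have h1 := collapse (fun p => blk M p.1 p.2 ⊗ₖ Matrix.single p.1 p.2 (1 : ℂ))
        rw [h1, ← blk_decomp M]
        exact hM)
  set v : Fin d' × Fin d' → ℂ := fun p => if p.1 = p.2 then 1 else 0 with hv
  have hN : ∀ (a b : Fin d') (c e' : Fin d'),
      (∑ k, ∑ l, T ⟨blk M k l, hmem k l⟩ ⊗ₖ Matrix.single k l (1 : ℂ)) (a, c) (b, e')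
        = T ⟨blk M c e', hmem c e'⟩ a b := by
    intro a b c e'
    simp only [Matrix.sum_apply, kroneckerMap_apply, Matrix.single, of_apply]
    rw [Finset.sum_eq_single c]
    · rw [Finset.sum_eq_single e'] <;> simp +contextual
    · intro k _ hk
      apply Finset.sum_eq_zero
      intro l _
      simp [hk]
    · simp
  have main : fC S T ⟨M, hmem⟩
      = dotProduct (star v)
          ((∑ k, ∑ l, T ⟨blk M k l, hmem k l⟩ ⊗ₖ Matrix.single k l (1 : ℂ)) *ᵥ v) := by
    simp only [fC_apply]
    simp only [dotProduct, Pi.star_apply, mulVec, Fintype.sum_prod_type, hN, hv]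
    simp only [apply_ite (star : ℂ → ℂ), star_one, star_zero, ite_mul, one_mul, zero_mul,
      mul_ite, mul_one, mul_zero]
    simp [Finset.sum_ite_eq, Finset.sum_ite_eq']
  rw [main]
  have h2 := collapse (fun p => T ⟨blk M p.1 p.2, hmem p.1 p.2⟩ ⊗ₖ Matrix.single p.1 p.2 (1 : ℂ))
  rw [← h2]
  exact key.dotProduct_mulVec_nonneg v

lemma fC_real (hherm : ∀ X ∈ S, Xᴴ ∈ S) (hT : IsCPOn S T) {P : Mat d} (hP : P.PosDef)
    (hPS : P ∈ S) {M : BigMat d d'} (h : M ∈ pdom S d') (hMh : Mᴴ = M) :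
    ((fC S T ⟨M, h⟩).re : ℂ) = fC S T ⟨M, h⟩ := by
  have h1 := fC_conj hherm hT hP hPS h
  have h2 : (⟨Mᴴ, pdom_conj hherm h⟩ : ↥(pdom S d')) = ⟨M, h⟩ := Subtype.ext hMh
  rw [h2] at h1
  exact Complex.conj_eq_iff_re.mp h1.symm

/-! ### The real structure -/

noncomputable def hermSub (m : Type*) [Fintype m] : Submodule ℝ (Matrix m m ℂ) where
  carrier := {M | Mᴴ = M}
  add_mem' := fun {a b} ha hb => by
    simp only [Set.mem_setOf_eq] at *
    rw [conjTranspose_add, ha, hb]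
  zero_mem' := conjTranspose_zero
  smul_mem' := fun r M hm => by
    simp only [Set.mem_setOf_eq] at *
    rw [conjTranspose_smul, star_trivial, hm]

noncomputable def psdCone (m : Type*) [Fintype m] : ConvexCone ℝ ↥(hermSub m) where
  carrier := {M | (M : Matrix m m ℂ).PosSemidef}
  smul_mem' := fun c hc M hM => by
    simp only [Set.mem_setOf_eq] at *
    have hcoe : ((c • M : ↥(hermSub m)) : Matrix m m ℂ) = (c : ℂ) • (M : Matrix m m ℂ) := by
      rw [Submodule.coe_smul]
      exact (algebraMap_smul ℂ c _).symm
    rw [hcoe]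
    exact posSemidef_csmul hM hc.le
  add_mem' := fun a ha b hb => by
    simp only [Set.mem_setOf_eq] at *
    rw [Submodule.coe_add]
    exact ha.add hb

lemma mem_psdCone {m : Type*} [Fintype m] (M : ↥(hermSub m)) :
    M ∈ psdCone m ↔ (M : Matrix m m ℂ).PosSemidef := Iff.rfl

noncomputable def pdomR (S : Submodule ℂ (Mat d)) (d' : ℕ) :
    Submodule ℝ ↥(hermSub (Fin d × Fin d')) :=
  Submodule.comap (hermSub (Fin d × Fin d')).subtype ((pdom S d').restrictScalars ℝ)

lemma mem_pdomR {S : Submodule ℂ (Mat d)} {M : ↥(hermSub (Fin d × Fin d'))} :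
    M ∈ pdomR S d' ↔ (M : BigMat d d') ∈ pdom S d' := Iff.rfl

noncomputable def floc (S : Submodule ℂ (Mat d)) (T : S →ₗ[ℂ] Mat d') :
    ↥(pdomR S d') →ₗ[ℝ] ℝ where
  toFun M := (fC S T ⟨((M : ↥(hermSub (Fin d × Fin d'))) : BigMat d d'), M.2⟩).re
  map_add' a b := by
    have h2 : (⟨(((a + b : ↥(pdomR S d')) : ↥(hermSub (Fin d × Fin d'))) : BigMat d d'),
        (a + b).2⟩ : ↥(pdom S d'))
        = ⟨((a : ↥(hermSub (Fin d × Fin d'))) : BigMat d d'), a.2⟩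
          + ⟨((b : ↥(hermSub (Fin d × Fin d'))) : BigMat d d'), b.2⟩ := by
      apply Subtype.ext; rfl
    rw [h2, map_add, Complex.add_re]
  map_smul' r a := by
    have h2 : (⟨(((r • a : ↥(pdomR S d')) : ↥(hermSub (Fin d × Fin d'))) : BigMat d d'),
        (r • a).2⟩ : ↥(pdom S d'))
        = (r : ℂ) • ⟨((a : ↥(hermSub (Fin d × Fin d'))) : BigMat d d'), a.2⟩ := by
      apply Subtype.ext
      show r • _ = (r : ℂ) • _
      exact (algebraMap_smul ℂ r _).symm
    rw [h2, LinearMap.map_smul, RingHom.id_apply, smul_eq_mul, Complex.re_ofReal_mul,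
      smul_eq_mul]

lemma kron_sub_one {A B : Mat d} :
    (A - B) ⊗ₖ (1 : Matrix (Fin d') (Fin d') ℂ)
      = A ⊗ₖ (1 : Matrix (Fin d') (Fin d') ℂ) - B ⊗ₖ (1 : Matrix (Fin d') (Fin d') ℂ) := by
  ext ⟨i, k⟩ ⟨j, l⟩
  simp [kroneckerMap_apply, sub_mul]

lemma kron_smul_one_one {c : ℂ} :
    ((c • 1 : Mat d)) ⊗ₖ (1 : Matrix (Fin d') (Fin d') ℂ) = c • (1 : BigMat d d') := by
  rw [smul_kronecker, Matrix.one_kronecker_one]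

end ArvAux

/-- Arveson-type extension theorem: a completely positive map on a Hermitian subspace
containing a positive definite matrix extends to a completely positive map on `M_d`. -/
theorem stmt6 {d d' : ℕ} (S : Submodule ℂ (Mat d))
    (hherm : ∀ X ∈ S, Xᴴ ∈ S)
    (P : Mat d) (hP : P.PosDef) (hPS : P ∈ S)
    (T : S →ₗ[ℂ] Mat d') (hT : IsCPOn S T) :
    ∃ T' : Mat d →ₗ[ℂ] Mat d', IsCP T' ∧ ∀ X (hX : X ∈ S), T' X = T ⟨X, hX⟩ := by
  classical
  -- Step 1: Riesz extension of the real part of the partial functional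
  have hriesz : ∃ g : ↥(ArvAux.hermSub (Fin d × Fin d')) →ₗ[ℝ] ℝ,
      (∀ x : ↥(ArvAux.pdomR S d'),
        g x.1 = (ArvAux.fC S T ⟨(x.1 : ArvAux.BigMat d d'), x.2⟩).re) ∧
      ∀ x : ↥(ArvAux.hermSub (Fin d × Fin d')),
        (x : ArvAux.BigMat d d').PosSemidef → 0 ≤ g x := by
    obtain ⟨g, hg1, hg2⟩ := riesz_extension ((ArvAux.psdCone (Fin d × Fin d')).toPointedCone (by exact PosSemidef.zero))
      ⟨ArvAux.pdomR S d', ArvAux.floc S T⟩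
      (by
        rintro x hx
        have h0 := ArvAux.fC_nonneg (S := S) (T := T) hT x.2 hx
        have := (Complex.le_def.mp h0).1
        simpa [ArvAux.floc] using this)
      (by
        intro y
        obtain ⟨ε, hε, hPε⟩ := ArvAux.posdef_sub hP
        obtain ⟨t, ht, hty⟩ := ArvAux.exists_shift (A := (y : ArvAux.BigMat d d')) y.2
        set c : ℝ := t / ε with hc
        have hc0 : 0 ≤ c := div_nonneg ht hε.le
        have hcε : (c : ℂ) * (ε : ℂ) = (t : ℂ) := by
          have hεne : (ε : ℝ) ≠ 0 := hε.ne'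
          rw [hc]; push_cast; field_simp
        have hP1psd : ((P ⊗ₖ (1 : Matrix (Fin d') (Fin d') ℂ))).PosSemidef :=
          ArvAux.kronecker_one_psd hP.posSemidef
        have hP1herm : (P ⊗ₖ (1 : Matrix (Fin d') (Fin d') ℂ)) ∈
            ArvAux.hermSub (Fin d × Fin d') := hP1psd.1
        have hxherm : ((c : ℂ) • (P ⊗ₖ (1 : Matrix (Fin d') (Fin d') ℂ))) ∈
            ArvAux.hermSub (Fin d × Fin d') := by
          show ((c : ℂ) • (P ⊗ₖ (1 : Matrix (Fin d') (Fin d') ℂ)))ᴴ = _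
          rw [conjTranspose_smul]
          have h5 : star ((c : ℂ)) = (c : ℂ) := by simp
          rw [h5, hP1psd.1]
        have hxmem : (⟨_, hxherm⟩ : ↥(ArvAux.hermSub (Fin d × Fin d'))) ∈
            ArvAux.pdomR S d' := by
          rw [ArvAux.mem_pdomR]
          exact Submodule.smul_mem _ _ (fun k l => by
            rw [ArvAux.blk_kronecker]; exact S.smul_mem _ hPS)
        refine ⟨⟨⟨_, hxherm⟩, hxmem⟩, ?_⟩
        show (((⟨_, hxherm⟩ : ↥(ArvAux.hermSub (Fin d × Fin d'))) + y :
            ↥(ArvAux.hermSub (Fin d × Fin d'))) : ArvAux.BigMat d d').PosSemidef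
        rw [Submodule.coe_add]
        show ((c : ℂ) • (P ⊗ₖ (1 : Matrix (Fin d') (Fin d') ℂ))
            + (y : ArvAux.BigMat d d')).PosSemidef
        have hP1ε : ((P ⊗ₖ (1 : Matrix (Fin d') (Fin d') ℂ)) - (ε : ℂ) • 1).PosSemidef := by
          have h6 := ArvAux.kronecker_one_psd (n' := Fin d') hPε
          rwa [ArvAux.kron_sub_one, ArvAux.kron_smul_one_one] at h6
        have heq : (c : ℂ) • (P ⊗ₖ (1 : Matrix (Fin d') (Fin d') ℂ)) + (y : ArvAux.BigMat d d')
            = (c : ℂ) • ((P ⊗ₖ (1 : Matrix (Fin d') (Fin d') ℂ)) - (ε : ℂ) • 1)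
              + ((t : ℂ) • 1 + (y : ArvAux.BigMat d d')) := by
          rw [smul_sub, smul_smul, hcε]
          abel
        rw [heq]
        exact (ArvAux.posSemidef_csmul hP1ε hc0).add hty)
    exact ⟨g, fun x => hg1 x, fun x hx => hg2 x hx⟩
  obtain ⟨g, hg1, hg2⟩ := hriesz
  -- Step 2: the hermitian/antihermitian parts
  have hre : ∀ M : ArvAux.BigMat d d', ((2 : ℂ)⁻¹ • (M + Mᴴ)) ∈
      ArvAux.hermSub (Fin d × Fin d') := by
    intro M
    show ((2 : ℂ)⁻¹ • (M + Mᴴ))ᴴ = _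
    rw [conjTranspose_smul, conjTranspose_add, conjTranspose_conjTranspose]
    have h5 : star ((2 : ℂ)⁻¹) = (2 : ℂ)⁻¹ := by norm_num
    rw [h5, add_comm]
  have him : ∀ M : ArvAux.BigMat d d', ((Complex.I / 2) • (Mᴴ - M)) ∈
      ArvAux.hermSub (Fin d × Fin d') := by
    intro M
    show ((Complex.I / 2) • (Mᴴ - M))ᴴ = _
    rw [conjTranspose_smul, conjTranspose_sub, conjTranspose_conjTranspose]
    have h5 : star (Complex.I / 2) = -(Complex.I / 2) := by
      apply Complex.ext <;> simp <;> norm_num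
    rw [h5]
    module
  set ψf : ArvAux.BigMat d d' → ℂ := fun M =>
    ((g ⟨(2 : ℂ)⁻¹ • (M + Mᴴ), hre M⟩ : ℝ) : ℂ)
      + Complex.I * ((g ⟨(Complex.I / 2) • (Mᴴ - M), him M⟩ : ℝ) : ℂ) with hψf
  -- additivity
  have hadd : ∀ M N : ArvAux.BigMat d d', ψf (M + N) = ψf M + ψf N := by
    intro M N
    have e1 : (⟨(2 : ℂ)⁻¹ • ((M + N) + (M + N)ᴴ), hre (M + N)⟩ :
        ↥(ArvAux.hermSub (Fin d × Fin d')))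
        = ⟨(2 : ℂ)⁻¹ • (M + Mᴴ), hre M⟩ + ⟨(2 : ℂ)⁻¹ • (N + Nᴴ), hre N⟩ := by
      apply Subtype.ext
      show (2 : ℂ)⁻¹ • ((M + N) + (M + N)ᴴ) = (2 : ℂ)⁻¹ • (M + Mᴴ) + (2 : ℂ)⁻¹ • (N + Nᴴ)
      rw [conjTranspose_add]
      module
    have e2 : (⟨(Complex.I / 2) • ((M + N)ᴴ - (M + N)), him (M + N)⟩ :
        ↥(ArvAux.hermSub (Fin d × Fin d')))
        = ⟨(Complex.I / 2) • (Mᴴ - M), him M⟩ + ⟨(Complex.I / 2) • (Nᴴ - N), him N⟩ := by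
      apply Subtype.ext
      show (Complex.I / 2) • ((M + N)ᴴ - (M + N))
          = (Complex.I / 2) • (Mᴴ - M) + (Complex.I / 2) • (Nᴴ - N)
      rw [conjTranspose_add]
      module
    rw [hψf]
    dsimp only
    rw [e1, e2, map_add, map_add]
    push_cast
    ring
  -- real homogeneity
  have hrs : ∀ (r : ℝ) (M : ArvAux.BigMat d d'), ψf ((r : ℂ) • M) = (r : ℂ) * ψf M := by
    intro r M
    have e1 : (⟨(2 : ℂ)⁻¹ • ((r : ℂ) • M + ((r : ℂ) • M)ᴴ), hre _⟩ :
        ↥(ArvAux.hermSub (Fin d × Fin d')))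
        = r • ⟨(2 : ℂ)⁻¹ • (M + Mᴴ), hre M⟩ := by
      apply Subtype.ext
      show (2 : ℂ)⁻¹ • ((r : ℂ) • M + ((r : ℂ) • M)ᴴ) = r • ((2 : ℂ)⁻¹ • (M + Mᴴ))
      rw [conjTranspose_smul, Complex.star_def, Complex.conj_ofReal,
        (algebraMap_smul ℂ r ((2 : ℂ)⁻¹ • (M + Mᴴ))).symm, Complex.coe_algebraMap]
      module
    have e2 : (⟨(Complex.I / 2) • (((r : ℂ) • M)ᴴ - (r : ℂ) • M), him _⟩ :
        ↥(ArvAux.hermSub (Fin d × Fin d')))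
        = r • ⟨(Complex.I / 2) • (Mᴴ - M), him M⟩ := by
      apply Subtype.ext
      show (Complex.I / 2) • (((r : ℂ) • M)ᴴ - (r : ℂ) • M)
          = r • ((Complex.I / 2) • (Mᴴ - M))
      rw [conjTranspose_smul, Complex.star_def, Complex.conj_ofReal,
        (algebraMap_smul ℂ r ((Complex.I / 2) • (Mᴴ - M))).symm, Complex.coe_algebraMap]
      module
    rw [hψf]
    dsimp only
    rw [e1, e2, LinearMap.map_smul, LinearMap.map_smul, smul_eq_mul, smul_eq_mul]
    push_cast
    ring
  -- I-homogeneity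
  have hIs : ∀ M : ArvAux.BigMat d d', ψf (Complex.I • M) = Complex.I * ψf M := by
    intro M
    have e1 : (⟨(2 : ℂ)⁻¹ • (Complex.I • M + (Complex.I • M)ᴴ), hre _⟩ :
        ↥(ArvAux.hermSub (Fin d × Fin d')))
        = -⟨(Complex.I / 2) • (Mᴴ - M), him M⟩ := by
      apply Subtype.ext
      show (2 : ℂ)⁻¹ • (Complex.I • M + (Complex.I • M)ᴴ)
          = -((Complex.I / 2) • (Mᴴ - M))
      rw [conjTranspose_smul, Complex.star_def, Complex.conj_I]
      module
    have e2 : (⟨(Complex.I / 2) • ((Complex.I • M)ᴴ - Complex.I • M), him _⟩ :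
        ↥(ArvAux.hermSub (Fin d × Fin d')))
        = ⟨(2 : ℂ)⁻¹ • (M + Mᴴ), hre M⟩ := by
      apply Subtype.ext
      show (Complex.I / 2) • ((Complex.I • M)ᴴ - Complex.I • M)
          = (2 : ℂ)⁻¹ • (M + Mᴴ)
      rw [conjTranspose_smul, Complex.star_def, Complex.conj_I]
      ext i j
      simp only [Matrix.smul_apply, Matrix.add_apply, Matrix.sub_apply, Matrix.neg_apply,
        conjTranspose_apply, smul_eq_mul, neg_smul, neg_mul]
      ring_nf
      simp only [Complex.I_sq]
      ring
    rw [hψf]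
    dsimp only
    rw [e1, e2, map_neg]
    push_cast
    ring_nf
    simp only [Complex.I_sq]
    ring
  -- full complex homogeneity
  have hsmul : ∀ (c : ℂ) (M : ArvAux.BigMat d d'), ψf (c • M) = c * ψf M := by
    intro c M
    have hd : c • M = ((c.re : ℂ)) • M + ((c.im : ℂ)) • (Complex.I • M) := by
      rw [smul_smul, ← add_smul, Complex.re_add_im]
    rw [hd, hadd, hrs, hrs, hIs]
    conv_rhs => rw [← Complex.re_add_im c]
    ring
  -- package as a linear map
  set ψL : ArvAux.BigMat d d' →ₗ[ℂ] ℂ :=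
    { toFun := ψf
      map_add' := hadd
      map_smul' := fun c M => by
        show ψf (c • M) = (RingHom.id ℂ) c • ψf M
        rw [hsmul, RingHom.id_apply, smul_eq_mul] } with hψL
  have hψL_apply : ∀ M, ψL M = ψf M := fun M => rfl
  -- ψ agrees with fC on the domain
  have hψ_pdom : ∀ (M : ArvAux.BigMat d d') (h : M ∈ ArvAux.pdom S d'),
      ψL M = ArvAux.fC S T ⟨M, h⟩ := by
    intro M h
    have hreP : ((2 : ℂ)⁻¹ • (M + Mᴴ)) ∈ ArvAux.pdom S d' :=
      Submodule.smul_mem _ _ (Submodule.add_mem _ h (ArvAux.pdom_conj hherm h))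
    have himP : ((Complex.I / 2) • (Mᴴ - M)) ∈ ArvAux.pdom S d' :=
      Submodule.smul_mem _ _ (Submodule.sub_mem _ (ArvAux.pdom_conj hherm h) h)
    have hg1a := hg1 ⟨⟨(2 : ℂ)⁻¹ • (M + Mᴴ), hre M⟩, hreP⟩
    have hg1b := hg1 ⟨⟨(Complex.I / 2) • (Mᴴ - M), him M⟩, himP⟩
    have hr1 : ((ArvAux.fC S T ⟨(2 : ℂ)⁻¹ • (M + Mᴴ), hreP⟩).re : ℂ)
        = ArvAux.fC S T ⟨(2 : ℂ)⁻¹ • (M + Mᴴ), hreP⟩ :=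
      ArvAux.fC_real hherm hT hP hPS hreP (hre M)
    have hr2 : ((ArvAux.fC S T ⟨(Complex.I / 2) • (Mᴴ - M), himP⟩).re : ℂ)
        = ArvAux.fC S T ⟨(Complex.I / 2) • (Mᴴ - M), himP⟩ :=
      ArvAux.fC_real hherm hT hP hPS himP (him M)
    have hfin : (⟨(2 : ℂ)⁻¹ • (M + Mᴴ), hreP⟩ : ↥(ArvAux.pdom S d'))
        + Complex.I • ⟨(Complex.I / 2) • (Mᴴ - M), himP⟩ = ⟨M, h⟩ := by
      apply Subtype.ext
      show (2 : ℂ)⁻¹ • (M + Mᴴ) + Complex.I • ((Complex.I / 2) • (Mᴴ - M)) = M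
      ext i j
      simp only [Matrix.add_apply, Matrix.smul_apply, Matrix.sub_apply, conjTranspose_apply,
        smul_eq_mul]
      ring_nf
      simp only [Complex.I_sq]
      ring
    rw [hψL_apply, hψf]
    dsimp only
    rw [hg1a, hg1b, hr1, hr2]
    conv_rhs => rw [← hfin, map_add, LinearMap.map_smul]
    rw [smul_eq_mul]
  -- ψ intertwines conjugation
  have hψ_conj : ∀ M : ArvAux.BigMat d d', ψL Mᴴ = starRingEnd ℂ (ψL M) := by
    intro M
    have e1 : (⟨(2 : ℂ)⁻¹ • (Mᴴ + Mᴴᴴ), hre Mᴴ⟩ : ↥(ArvAux.hermSub (Fin d × Fin d')))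
        = ⟨(2 : ℂ)⁻¹ • (M + Mᴴ), hre M⟩ := by
      apply Subtype.ext
      show (2 : ℂ)⁻¹ • (Mᴴ + Mᴴᴴ) = (2 : ℂ)⁻¹ • (M + Mᴴ)
      rw [conjTranspose_conjTranspose, add_comm]
    have e2 : (⟨(Complex.I / 2) • (Mᴴᴴ - Mᴴ), him Mᴴ⟩ :
        ↥(ArvAux.hermSub (Fin d × Fin d')))
        = -⟨(Complex.I / 2) • (Mᴴ - M), him M⟩ := by
      apply Subtype.ext
      show (Complex.I / 2) • (Mᴴᴴ - Mᴴ) = -((Complex.I / 2) • (Mᴴ - M))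
      rw [conjTranspose_conjTranspose]
      module
    rw [hψL_apply, hψL_apply, hψf]
    dsimp only
    rw [e1, e2, map_neg]
    simp only [_root_.map_add, _root_.map_mul, Complex.conj_I, Complex.conj_ofReal]
    push_cast
    ring
  -- ψ is nonnegative on psd matrices
  have hψ_psd : ∀ M : ArvAux.BigMat d d', M.PosSemidef → 0 ≤ ψL M := by
    intro M hM
    have e1 : (⟨(2 : ℂ)⁻¹ • (M + Mᴴ), hre M⟩ : ↥(ArvAux.hermSub (Fin d × Fin d')))
        = ⟨M, hM.1⟩ := by
      apply Subtype.ext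
      show (2 : ℂ)⁻¹ • (M + Mᴴ) = M
      rw [show Mᴴ = M from hM.1]
      module
    have e2 : (⟨(Complex.I / 2) • (Mᴴ - M), him M⟩ :
        ↥(ArvAux.hermSub (Fin d × Fin d'))) = 0 := by
      apply Subtype.ext
      show (Complex.I / 2) • (Mᴴ - M) = 0
      rw [show Mᴴ = M from hM.1, sub_self, smul_zero]
    rw [hψL_apply, hψf]
    dsimp only
    rw [e1, e2, map_zero]
    simpa using Complex.zero_le_real.mpr (hg2 ⟨M, hM.1⟩ hM)
  -- the extension
  refine ⟨{ toFun := fun X => Matrix.of fun k l => ψL (X ⊗ₖ Matrix.single k l (1 : ℂ))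
            map_add' := by
              intro X Y
              ext k l
              simp only [Matrix.of_apply, Matrix.add_apply]
              rw [Matrix.add_kronecker, map_add]
            map_smul' := by
              intro c X
              ext k l
              simp only [Matrix.of_apply, Matrix.smul_apply, RingHom.id_apply, smul_eq_mul]
              rw [Matrix.smul_kronecker, LinearMap.map_smul, smul_eq_mul] }, ?_, ?_⟩
  · -- complete positivity
    intro n m X K h
    simp only [LinearMap.coe_mk, AddHom.coe_mk]
    set M : Matrix (Fin d × Fin n) (Fin d × Fin n) ℂ := ∑ j, X j ⊗ₖ K j with hM
    have hMherm : Mᴴ = M := h.1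
    set Y : Fin d' → Fin d' → Fin n → Fin n → ArvAux.BigMat d d' :=
      fun k l a b => Matrix.of fun p q =>
        if k = p.2 ∧ l = q.2 then M (p.1, a) (q.1, b) else 0 with hY
    set R : Matrix (Fin d' × Fin n) (Fin d' × Fin n) ℂ :=
      ∑ j, (Matrix.of fun k l => ψL (X j ⊗ₖ Matrix.single k l (1 : ℂ)) : Mat d') ⊗ₖ K j
      with hR
    have hRent : ∀ (k l : Fin d') (a b : Fin n),
        R (k, a) (l, b) = ψL (Y k l a b) := by
      intro k l a b
      have h1 : R (k, a) (l, b) = ∑ j, ψL ((K j a b) • (X j ⊗ₖ Matrix.single k l (1 : ℂ))) := by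
        rw [hR]
        simp only [Matrix.sum_apply, kroneckerMap_apply, Matrix.of_apply]
        refine Finset.sum_congr rfl fun j _ => ?_
        rw [LinearMap.map_smul, smul_eq_mul, mul_comm]
      rw [h1, ← map_sum]
      congr 1
      ext ⟨i, c⟩ ⟨i', e⟩
      simp only [Matrix.sum_apply, Matrix.smul_apply, kroneckerMap_apply, Matrix.single,
        Matrix.of_apply, smul_eq_mul, hY, hM]
      by_cases hc : k = c ∧ l = e
      · obtain ⟨rfl, rfl⟩ := hc
        simp [hM, Matrix.sum_apply, mul_comm]
      · simp [hc]
    refine PosSemidef.of_dotProduct_mulVec_nonneg ?_ ?_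
    · -- hermitian
      show Rᴴ = R
      ext ⟨k, a⟩ ⟨l, b⟩
      rw [conjTranspose_apply, hRent, hRent]
      rw [show (star (ψL (Y l k b a)) : ℂ) = starRingEnd ℂ (ψL (Y l k b a)) from rfl]
      rw [← hψ_conj]
      congr 1
      ext ⟨i, c⟩ ⟨i', e⟩
      have h3 : star (M (i', b) (i, a)) = M (i, a) (i', b) := by
        have h4 := congrFun (congrFun hMherm (i, a)) (i', b)
        rwa [conjTranspose_apply] at h4
      simp only [conjTranspose_apply, Matrix.of_apply, hY]
      by_cases h1 : k = c <;> by_cases h2 : l = e <;> simp [h1, h2, and_comm, h3]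
    · -- quadratic form
      intro w
      set V : Matrix (Fin d × Fin n) (Fin d × Fin d') ℂ :=
        Matrix.of fun r s => if r.1 = s.1 then w (s.2, r.2) else 0 with hV
      have hZpsd : (Vᴴ * M * V).PosSemidef := h.conjTranspose_mul_mul_same V
      have hZent : ∀ p q : Fin d × Fin d', (Vᴴ * M * V) p q
          = ∑ a, ∑ b, star (w (p.2, a)) * w (q.2, b) * M (p.1, a) (q.1, b) := by
        intro p q
        simp only [Matrix.mul_apply, conjTranspose_apply, Matrix.of_apply, hV,
          Fintype.sum_prod_type]
        simp only [apply_ite (star : ℂ → ℂ), star_zero, ite_mul, zero_mul, mul_ite, mul_zero,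
          Finset.sum_ite_eq', Finset.mem_univ, if_true]
        rw [Finset.sum_comm]
        simp only [Finset.sum_ite_irrel, Finset.sum_const_zero, Finset.sum_ite_eq',
          Finset.mem_univ, if_true]
        conv_rhs => rw [Finset.sum_comm]
        refine Finset.sum_congr rfl fun b _ => ?_
        rw [Finset.sum_mul]
        refine Finset.sum_congr rfl fun a _ => ?_
        ring
      have hdec : Vᴴ * M * V = ∑ k, ∑ a, ∑ l, ∑ b,
          (star (w (k, a)) * w (l, b)) • Y k l a b := by
        ext p q
        rw [hZent]
        simp only [Matrix.sum_apply, Matrix.smul_apply, Matrix.of_apply, hY, smul_eq_mul]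
        rw [Finset.sum_eq_single p.2]
        · refine Finset.sum_congr rfl fun a _ => ?_
          rw [Finset.sum_eq_single q.2]
          · refine Finset.sum_congr rfl fun b _ => ?_
            simp
          · intro l _ hl
            apply Finset.sum_eq_zero
            intro b _
            simp [hl]
          · simp
        · intro k _ hk
          apply Finset.sum_eq_zero
          intro a _
          apply Finset.sum_eq_zero
          intro l _
          apply Finset.sum_eq_zero
          intro b _
          simp [hk]
        · simp
      have hquad : dotProduct (star w) (R *ᵥ w)
          = ∑ k, ∑ a, ∑ l, ∑ b, star (w (k, a)) * w (l, b) * ψL (Y k l a b) := by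
        simp only [dotProduct, mulVec, Pi.star_apply, Fintype.sum_prod_type, Finset.mul_sum]
        refine Finset.sum_congr rfl fun k _ => Finset.sum_congr rfl fun a _ =>
          Finset.sum_congr rfl fun l _ => Finset.sum_congr rfl fun b _ => ?_
        rw [hRent]
        ring
      have hψsum : ψL (Vᴴ * M * V)
          = ∑ k, ∑ a, ∑ l, ∑ b, star (w (k, a)) * w (l, b) * ψL (Y k l a b) := by
        rw [hdec]
        simp only [map_sum, LinearMap.map_smul, smul_eq_mul]
      rw [hquad, ← hψsum]
      exact hψ_psd _ hZpsd
  · -- the extension property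
    intro X hX
    ext k l
    simp only [LinearMap.coe_mk, AddHom.coe_mk, Matrix.of_apply]
    have hmem : (X ⊗ₖ Matrix.single k l (1 : ℂ)) ∈ ArvAux.pdom S d' := fun a b => by
      rw [ArvAux.blk_kronecker]; exact S.smul_mem _ hX
    rw [hψ_pdom _ hmem, ArvAux.fC_apply]
    have hblk : ∀ a b, (⟨ArvAux.blk (X ⊗ₖ Matrix.single k l (1 : ℂ)) a b, hmem a b⟩ : S)
        = (Matrix.single k l (1 : ℂ) a b) • ⟨X, hX⟩ := fun a b =>
      Subtype.ext (ArvAux.blk_kronecker X (Matrix.single k l (1 : ℂ)) a b)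
    simp only [hblk, LinearMap.map_smul, Matrix.smul_apply, smul_eq_mul]
    simp only [Matrix.single, Matrix.of_apply, ite_mul, one_mul, zero_mul]
    rw [Finset.sum_eq_single k]
    · rw [Finset.sum_eq_single l] <;> simp +contextual [eq_comm]
    · intro a _ ha
      apply Finset.sum_eq_zero
      intro b _
      simp [Ne.symm ha]
    · simp
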